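/- arXiv:2308.15478 — 5 statements merged into one kernel-verified Lean document; each statement's English description precedes it below -/
import Mathlib

section
/- Let ω be an admissible penalty. Let N, C, P be positive integers, let Φ_1, …, Φ_N be real C×P matrices and y_1, …, y_N ∈ ℝ^C, and suppose there exists β ∈ ℝ^P with Φ_i β = y_i for all i. Then the infimum of Ω_ω(M) + ‖θ‖₂² over all P×P real matrices M and vectors θ ∈ ℝ^P satisfying Φ_i M θ = y_i for all i equals the infimum of ω̃(‖β‖₂) over all β ∈ ℝ^P satisfying Φ_i β = y_i for all i. -/
open Matrix Set

noncomputable section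

/-- An admissible penalty: nonnegative, minimized at `ω 1 = 0`, strictly decreasing on `(0,1]`
and strictly increasing on `[1,∞)`. -/
def Admissible (ω : ℝ → ℝ) : Prop :=
  (∀ x, 0 ≤ ω x) ∧ ω 1 = 0 ∧ StrictAntiOn ω (Set.Ioc 0 1) ∧ StrictMonoOn ω (Set.Ici 1)

/-- The scalar effective penalty `ω̃ v = inf_{z ≥ 1} (ω z + v² / z²)`. -/
def effPenalty (ω : ℝ → ℝ) (v : ℝ) : ℝ :=
  sInf ((fun z => ω z + v ^ 2 / z ^ 2) '' Set.Ici (1 : ℝ))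

/-- The joint penalty `(ω₁ ⊕ ω₂) v = inf_{1 ≤ z ≤ v} (ω₁ z + ω₂ (v / z))`. -/
def jointPenalty (ω₁ ω₂ : ℝ → ℝ) (v : ℝ) : ℝ :=
  sInf ((fun z => ω₁ z + ω₂ (v / z)) '' Set.Icc (1 : ℝ) v)

/-- The (unordered) singular values of a real `P × Q` matrix: square roots of the
eigenvalues of `Xᴴ X`. -/
def svals {P Q : ℕ} (X : Matrix (Fin P) (Fin Q) ℝ) (j : Fin Q) : ℝ :=
  Real.sqrt ((Matrix.isHermitian_conjTranspose_mul_self X).eigenvalues j)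

/-- Singular values sorted in decreasing order: `svalsDesc X j` is the `j`-th largest
singular value of `X`. -/
def svalsDesc {P Q : ℕ} (X : Matrix (Fin P) (Fin Q) ℝ) (j : Fin Q) : ℝ :=
  svals X (Tuple.sort (fun i => - svals X i) j)

/-- The spectral penalty `Ω_ω M = Σ_j ω (σ_j M)`. -/
def specPenalty (ω : ℝ → ℝ) {P : ℕ} (M : Matrix (Fin P) (Fin P) ℝ) : ℝ :=
  ∑ j, ω (svals M j)

/-- Frobenius norm squared. -/
def frobSq {P Q : ℕ} (X : Matrix (Fin P) (Fin Q) ℝ) : ℝ :=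
  ∑ i, ∑ j, X i j ^ 2

/-- Euclidean norm of a vector. -/
def enorm2 {P : ℕ} (v : Fin P → ℝ) : ℝ :=
  Real.sqrt (∑ j, v j ^ 2)

/-- The induced effective spectral penalty `Ω̃_g B = Σ_{j=1}^{min(P,Q)} g̃(σ_j B)`. -/
def effSpec (g : ℝ → ℝ) {P Q : ℕ} (B : Matrix (Fin P) (Fin Q) ℝ) : ℝ :=
  ∑ j : Fin (min P Q), effPenalty g (svalsDesc B (Fin.castLE (min_le_right P Q) j))

section AuxLemmas

variable {P : ℕ}

lemma aux_eigenvalues_congr {n : ℕ} {A B : Matrix (Fin n) (Fin n) ℝ} (h : A = B)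
    (hA : A.IsHermitian) (hB : B.IsHermitian) : hA.eigenvalues = hB.eigenvalues := by
  subst h; rfl

lemma aux_sum_eig {n : ℕ} {A : Matrix (Fin n) (Fin n) ℝ} (hA : A.IsHermitian) :
    ∑ j, hA.eigenvalues j = A.trace := by
  conv_rhs => rw [hA.spectral_theorem, Unitary.conjStarAlgAut_apply]
  rw [trace_mul_cycle, show (star (hA.eigenvectorUnitary : Matrix (Fin n) (Fin n) ℝ)) *
      (hA.eigenvectorUnitary : Matrix (Fin n) (Fin n) ℝ) = 1 from
      mem_unitaryGroup_iff'.mp hA.eigenvectorUnitary.2, one_mul, trace_diagonal]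
  simp [RCLike.ofReal_real_eq_id]

lemma aux_eig_rankOne_mem {c : ℝ} {u : Fin P → ℝ} (hu : u ⬝ᵥ u = 1)
    (hA : (c • vecMulVec u u + 1 : Matrix (Fin P) (Fin P) ℝ).IsHermitian) (j : Fin P) :
    hA.eigenvalues j = 1 ∨ hA.eigenvalues j = 1 + c := by
  have hv := hA.mulVec_eigenvectorBasis j
  set v : Fin P → ℝ := ⇑(hA.eigenvectorBasis j) with hvdef
  set t := hA.eigenvalues j with ht
  have hvne : v ≠ 0 := by
    intro h0
    have h1 : ‖hA.eigenvectorBasis j‖ = 1 := hA.eigenvectorBasis.orthonormal.1 j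
    have : (hA.eigenvectorBasis j : EuclideanSpace ℝ (Fin P)) = 0 := by
      ext i; exact congrFun h0 i
    rw [this] at h1; simp at h1
  have key : (c • vecMulVec u u + 1 : Matrix (Fin P) (Fin P) ℝ) *ᵥ v
      = (c * (u ⬝ᵥ v)) • u + v := by
    funext i
    simp only [add_mulVec, smul_mulVec, one_mulVec, Pi.add_apply, Pi.smul_apply,
      smul_eq_mul]
    have h2 : (vecMulVec u u *ᵥ v) i = (u ⬝ᵥ v) * u i := by
      simp only [mulVec, dotProduct, vecMulVec_apply, Finset.sum_mul]
      exact Finset.sum_congr rfl fun k _ => by ring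
    rw [h2]; ring
  have e1 : u ⬝ᵥ ((c • vecMulVec u u + 1 : Matrix (Fin P) (Fin P) ℝ) *ᵥ v)
      = c * (u ⬝ᵥ v) + u ⬝ᵥ v := by
    rw [key, dotProduct_add, dotProduct_smul]
    simp [hu, smul_eq_mul]
  have e2 : u ⬝ᵥ ((c • vecMulVec u u + 1 : Matrix (Fin P) (Fin P) ℝ) *ᵥ v)
      = t * (u ⬝ᵥ v) := by rw [hv]; simp [dotProduct_smul, smul_eq_mul]
  have h2 : (u ⬝ᵥ v) * (1 + c - t) = 0 := by linear_combination e2 - e1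
  rcases mul_eq_zero.mp h2 with h | h
  · left
    have hAvv : (c * (u ⬝ᵥ v)) • u + v = t • v := by rw [← key, hv]
    rw [h] at hAvv
    simp only [mul_zero, zero_smul, zero_add] at hAvv
    obtain ⟨i, hi⟩ := Function.ne_iff.mp hvne
    have := congrFun hAvv i
    simp only [Pi.smul_apply, smul_eq_mul] at this
    have h3 : (t - 1) * v i = 0 := by linear_combination -this
    rcases mul_eq_zero.mp h3 with h' | h'
    · linarith
    · exact absurd h' hi
  · right; linarith

lemma aux_rankOne_mul_self {u : Fin P → ℝ} (hu : u ⬝ᵥ u = 1) {z : ℝ} :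
    ((z - 1) • vecMulVec u u + 1 : Matrix (Fin P) (Fin P) ℝ)ᵀ *
      ((z - 1) • vecMulVec u u + 1) = (z ^ 2 - 1) • vecMulVec u u + 1 := by
  have hVT : (vecMulVec u u)ᵀ = vecMulVec u u := by
    ext i j; simp [transpose_apply, vecMulVec_apply, mul_comm]
  have hVV : vecMulVec u u * vecMulVec u u = vecMulVec u u := by
    ext i j
    simp only [mul_apply, vecMulVec_apply]
    have hu' : ∑ k, u k * u k = 1 := hu
    calc ∑ k, u i * u k * (u k * u j) = (∑ k, u k * u k) * (u i * u j) := by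
          rw [Finset.sum_mul]; exact Finset.sum_congr rfl fun k _ => by ring
      _ = u i * u j := by rw [hu', one_mul]
  rw [transpose_add, transpose_smul, hVT, transpose_one, add_mul, mul_add, mul_add,
    mul_one, one_mul, smul_mul_assoc, mul_smul_comm, hVV, smul_smul]
  simp only [mul_one, one_mul]
  have h : (z ^ 2 - 1 : ℝ) = (z - 1) * (z - 1) + ((z - 1) + (z - 1)) := by ring
  rw [h, add_smul, add_smul]
  abel

lemma aux_specPenalty_rankOne (ω : ℝ → ℝ) (hω : Admissible ω)
    {u : Fin P → ℝ} (hu : u ⬝ᵥ u = 1) {z : ℝ} (hz : 1 ≤ z) :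
    specPenalty ω ((z - 1) • vecMulVec u u + 1) = ω z := by
  classical
  set M : Matrix (Fin P) (Fin P) ℝ := (z - 1) • vecMulVec u u + 1 with hM
  have hMM := aux_rankOne_mul_self (z := z) hu
  have hB : ((z ^ 2 - 1) • vecMulVec u u + 1 : Matrix (Fin P) (Fin P) ℝ).IsHermitian :=
    by
      rw [← hMM]
      have h := Matrix.isHermitian_conjTranspose_mul_self M
      rwa [conjTranspose_eq_transpose_of_trivial] at h
  set e := hB.eigenvalues with he
  have hsv : ∀ j, svals M j = Real.sqrt (e j) := by
    intro j
    unfold svals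
    rw [aux_eigenvalues_congr (A := Mᴴ * M)
      (by rw [conjTranspose_eq_transpose_of_trivial]; exact hMM) _ hB]
  have hmem : ∀ j, e j = 1 ∨ e j = z ^ 2 := by
    intro j
    rcases aux_eig_rankOne_mem hu hB j with h | h
    · exact Or.inl h
    · right; rw [show e j = 1 + (z ^ 2 - 1) from h]; ring
  have hz0 : (0:ℝ) ≤ z := le_trans zero_le_one hz
  have hsum : ∑ j, e j = (P : ℝ) + (z ^ 2 - 1) := by
    rw [aux_sum_eig]
    rw [trace_add, trace_smul, trace_one]
    have : (vecMulVec u u : Matrix (Fin P) (Fin P) ℝ).trace = 1 := by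
      have hu' : ∑ k, u k * u k = 1 := hu
      simp only [trace, diag_apply, vecMulVec_apply]
      rw [hu']
    rw [this]
    simp [mul_comm]
    ring
  rcases eq_or_lt_of_le hz with hz1 | hz1
  · have : ∀ j, e j = 1 := by
      intro j; rcases hmem j with h | h
      · exact h
      · rw [h, ← hz1]; ring
    unfold specPenalty
    rw [Finset.sum_congr rfl fun j _ => by rw [hsv j, this j, Real.sqrt_one, hω.2.1]]
    simp [← hz1, hω.2.1]
  · have hzz : (1:ℝ) < z ^ 2 := by nlinarith
    set S := Finset.univ.filter (fun j => e j = z ^ 2) with hS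
    have hcard : (S.card : ℝ) * (z ^ 2 - 1) = z ^ 2 - 1 := by
      have hsplit := Finset.sum_filter_add_sum_filter_not Finset.univ
        (fun j => e j = z ^ 2) e
      have h1 : ∑ j ∈ S, e j = (S.card : ℝ) * z ^ 2 := by
        rw [Finset.sum_congr rfl (fun j hj => (Finset.mem_filter.mp hj).2)]
        simp [mul_comm]
        exact Or.inl rfl
      have h2 : ∑ j ∈ Finset.univ.filter (fun j => ¬ e j = z ^ 2), e j
          = ((Finset.univ.filter (fun j => ¬ e j = z ^ 2)).card : ℝ) := by
        rw [Finset.sum_congr rfl (fun j hj => ((hmem j).resolve_right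
          (Finset.mem_filter.mp hj).2))]
        simp
      have hcards : S.card + (Finset.univ.filter (fun j => ¬ e j = z ^ 2)).card = P := by
        rw [Finset.card_filter_add_card_filter_not]
        simp
      have h3 : (S.card : ℝ) * z ^ 2 + ((Finset.univ.filter (fun j => ¬ e j = z ^ 2)).card : ℝ)
          = (P : ℝ) + (z ^ 2 - 1) := by
        rw [← h1, ← h2, hsplit, hsum]
      have hPcast : ((S.card : ℝ)) + ((Finset.univ.filter (fun j => ¬ e j = z ^ 2)).card : ℝ)
          = (P : ℝ) := by exact_mod_cast congrArg (Nat.cast : ℕ → ℝ) hcards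
      nlinarith [h3, hPcast]
    have hcard1 : S.card = 1 := by
      have hne : z ^ 2 - 1 ≠ 0 := by nlinarith
      have : (S.card : ℝ) = 1 := by
        rcases mul_eq_zero.mp (by linear_combination hcard :
            ((S.card : ℝ) - 1) * (z ^ 2 - 1) = 0) with h | h
        · linarith
        · exact absurd h hne
      exact_mod_cast this
    obtain ⟨j0, hj0⟩ := Finset.card_eq_one.mp hcard1
    unfold specPenalty
    have hsplit := Finset.sum_filter_add_sum_filter_not Finset.univ
      (fun j => e j = z ^ 2) (fun j => ω (svals M j))
    rw [← hsplit]
    have hA2 : ∑ j ∈ Finset.univ.filter (fun j => ¬ e j = z ^ 2), ω (svals M j) = 0 := by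
      apply Finset.sum_eq_zero
      intro j hj
      rw [hsv j, (hmem j).resolve_right (Finset.mem_filter.mp hj).2, Real.sqrt_one, hω.2.1]
    have hA1 : ∑ j ∈ Finset.univ.filter (fun j => e j = z ^ 2), ω (svals M j) = ω z := by
      rw [show Finset.univ.filter (fun j => e j = z ^ 2) = S from rfl, hj0,
        Finset.sum_singleton, hsv j0]
      have hj0S : j0 ∈ S := by rw [hj0]; exact Finset.mem_singleton_self j0
      rw [(Finset.mem_filter.mp hj0S).2, Real.sqrt_sq hz0]
    rw [hA1, hA2, add_zero]

lemma aux_mulVec_sq_le (M : Matrix (Fin P) (Fin P) ℝ) (θ : Fin P → ℝ) {j0 : Fin P}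
    (hmax : ∀ j, (Matrix.isHermitian_conjTranspose_mul_self M).eigenvalues j ≤
      (Matrix.isHermitian_conjTranspose_mul_self M).eigenvalues j0) :
    ∑ i, (M *ᵥ θ) i ^ 2 ≤
      (Matrix.isHermitian_conjTranspose_mul_self M).eigenvalues j0 * ∑ j, θ j ^ 2 := by
  set hA := Matrix.isHermitian_conjTranspose_mul_self M with hAdef
  set U : Matrix (Fin P) (Fin P) ℝ := (hA.eigenvectorUnitary : Matrix (Fin P) (Fin P) ℝ)
    with hUdef
  set e := hA.eigenvalues with hedef
  have hstar : star U = Uᵀ := by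
    rw [Matrix.star_eq_conjTranspose, Matrix.conjTranspose_eq_transpose_of_trivial]
  set w : Fin P → ℝ := Uᵀ *ᵥ θ with hwdef
  have hUU : U * Uᵀ = 1 := by
    rw [← hstar]; exact mem_unitaryGroup_iff.mp hA.eigenvectorUnitary.2
  have hdot : ∀ x : Fin P → ℝ, θ ⬝ᵥ (U *ᵥ x) = w ⬝ᵥ x := by
    intro x
    rw [dotProduct_mulVec, hwdef, mulVec_transpose]
  have hspec : Mᵀ * M = U * diagonal e * Uᵀ := by
    rw [← hstar, hUdef, hedef]
    have := hA.spectral_theorem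
    simpa [RCLike.ofReal_real_eq_id, Function.comp, Unitary.conjStarAlgAut_apply,
      conjTranspose_eq_transpose_of_trivial] using this
  have h1 : ∑ i, (M *ᵥ θ) i ^ 2 = θ ⬝ᵥ ((Mᵀ * M) *ᵥ θ) := by
    rw [← mulVec_mulVec, dotProduct_mulVec, ← mulVec_transpose]
    simp [dotProduct, sq]
  have h2 : θ ⬝ᵥ ((Mᵀ * M) *ᵥ θ) = ∑ j, e j * w j ^ 2 := by
    rw [hspec, ← mulVec_mulVec, ← mulVec_mulVec, hdot]
    simp only [dotProduct, mulVec_diagonal]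
    exact Finset.sum_congr rfl fun j _ => by ring
  have h3 : ∑ j, w j ^ 2 = ∑ j, θ j ^ 2 := by
    have : w ⬝ᵥ w = θ ⬝ᵥ θ := by
      rw [hwdef, mulVec_transpose, ← dotProduct_mulVec, ← mulVec_transpose,
        mulVec_mulVec, hUU, one_mulVec]
    simpa [dotProduct, sq] using this
  rw [h1, h2, ← h3, Finset.mul_sum]
  exact Finset.sum_le_sum fun j _ => mul_le_mul_of_nonneg_right (hmax j) (sq_nonneg _)

end AuxLemmas

/-- The structureless adaptive feature learning problem over `(M, θ)` with
spectral penalty `Ω_ω(M) + ‖θ‖₂²` has the same optimal value as the linearly constrained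
problem over `β` with effective penalty `ω̃(‖β‖₂)`. -/
theorem structureless_equivalent_optimization
    {N C P : ℕ} (hN : 0 < N) (hC : 0 < C) (hP : 0 < P)
    (ω : ℝ → ℝ) (hω : Admissible ω)
    (Φ : Fin N → Matrix (Fin C) (Fin P) ℝ) (y : Fin N → Fin C → ℝ)
    (hfeas : ∃ β : Fin P → ℝ, ∀ i, (Φ i) *ᵥ β = y i) :
    sInf {v : ℝ | ∃ (M : Matrix (Fin P) (Fin P) ℝ) (θ : Fin P → ℝ),
        (∀ i, (Φ i) *ᵥ (M *ᵥ θ) = y i) ∧ v = specPenalty ω M + (enorm2 θ) ^ 2} =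
    sInf {v : ℝ | ∃ β : Fin P → ℝ, (∀ i, (Φ i) *ᵥ β = y i) ∧
        v = effPenalty ω (enorm2 β)} := by
  classical
  obtain ⟨β₀, hβ₀⟩ := hfeas
  have hωnn := hω.1
  have hω1 := hω.2.1
  set A : Set ℝ := {v : ℝ | ∃ (M : Matrix (Fin P) (Fin P) ℝ) (θ : Fin P → ℝ),
      (∀ i, (Φ i) *ᵥ (M *ᵥ θ) = y i) ∧ v = specPenalty ω M + (enorm2 θ) ^ 2} with hAdef
  set B : Set ℝ := {v : ℝ | ∃ β : Fin P → ℝ, (∀ i, (Φ i) *ᵥ β = y i) ∧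
      v = effPenalty ω (enorm2 β)} with hBdef
  have hsq : ∀ (Q : ℕ) (v : Fin Q → ℝ), (enorm2 v) ^ 2 = ∑ j, v j ^ 2 := fun Q v =>
    Real.sq_sqrt (Finset.sum_nonneg fun j _ => sq_nonneg _)
  have hspnn : ∀ M : Matrix (Fin P) (Fin P) ℝ, 0 ≤ specPenalty ω M := fun M =>
    Finset.sum_nonneg fun j _ => hωnn _
  have himgne : ∀ v : ℝ, ((fun z => ω z + v ^ 2 / z ^ 2) '' Set.Ici (1:ℝ)).Nonempty :=
    fun v => ⟨_, ⟨1, Set.mem_Ici.mpr le_rfl, rfl⟩⟩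
  have himgbd : ∀ v : ℝ, BddBelow ((fun z => ω z + v ^ 2 / z ^ 2) '' Set.Ici (1:ℝ)) := by
    intro v
    refine ⟨0, ?_⟩
    rintro x ⟨z, hz, rfl⟩
    have h1 : (0:ℝ) ≤ v ^ 2 / z ^ 2 := div_nonneg (sq_nonneg _) (sq_nonneg _)
    have := hωnn z
    simp only
    linarith
  have heffnn : ∀ v : ℝ, 0 ≤ effPenalty ω v := by
    intro v
    refine le_csInf (himgne v) ?_
    rintro x ⟨z, hz, rfl⟩
    have h1 : (0:ℝ) ≤ v ^ 2 / z ^ 2 := div_nonneg (sq_nonneg _) (sq_nonneg _)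
    have := hωnn z
    simp only
    linarith
  have hAbd : BddBelow A := by
    refine ⟨0, ?_⟩
    rintro x ⟨M, θ, -, rfl⟩
    exact add_nonneg (hspnn M) (sq_nonneg _)
  have hBbd : BddBelow B := by
    refine ⟨0, ?_⟩
    rintro x ⟨β, -, rfl⟩
    exact heffnn _
  have hBne : B.Nonempty := ⟨_, β₀, hβ₀, rfl⟩
  -- a distinguished unit vector (needs P > 0)
  have hAne : A.Nonempty := by
    refine ⟨_, 1, β₀, fun i => ?_, rfl⟩
    rw [one_mulVec]; exact hβ₀ i
  apply le_antisymm
  · -- sInf A ≤ sInf B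
    refine le_csInf hBne ?_
    rintro b ⟨β, hβ, rfl⟩
    refine le_csInf (himgne (enorm2 β)) ?_
    rintro x ⟨z, hzmem, rfl⟩
    have hz : (1:ℝ) ≤ z := hzmem
    have hz0 : (0:ℝ) < z := lt_of_lt_of_le one_pos hz
    by_cases hβ0 : β = 0
    · -- here y = 0, so (1, 0) is feasible with value 0
      have hy0 : ∀ i, y i = 0 := fun i => by rw [← hβ i, hβ0, mulVec_zero]
      have hu : (Pi.single (⟨0, hP⟩ : Fin P) (1:ℝ)) ⬝ᵥ (Pi.single (⟨0, hP⟩ : Fin P) 1) = 1 := by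
        simp [dotProduct, Pi.single_apply]
      have hsp1 : specPenalty ω (1 : Matrix (Fin P) (Fin P) ℝ) = 0 := by
        have := aux_specPenalty_rankOne ω hω hu (le_refl 1)
        simpa [sub_self, zero_smul, zero_add, hω1] using this
      have h0A : (0:ℝ) ∈ A := by
        refine ⟨1, 0, fun i => ?_, ?_⟩
        · rw [mulVec_zero, mulVec_zero, hy0 i]
        · simp [hsp1, enorm2]
      have : sInf A ≤ 0 := csInf_le hAbd h0A
      have hpos : (0:ℝ) ≤ ω z + (enorm2 β) ^ 2 / z ^ 2 :=
        add_nonneg (hωnn z) (div_nonneg (sq_nonneg _) (sq_nonneg _))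
      linarith
    · set nb := enorm2 β with hnb
      have hnbsq : nb ^ 2 = ∑ j, β j ^ 2 := hsq P β
      have hsumpos : 0 < ∑ j, β j ^ 2 := by
        obtain ⟨i, hi⟩ := Function.ne_iff.mp hβ0
        refine Finset.sum_pos' (fun j _ => sq_nonneg _) ⟨i, Finset.mem_univ i, ?_⟩
        exact lt_of_le_of_ne (sq_nonneg _) (Ne.symm (pow_ne_zero 2 hi))
      have hnbpos : 0 < nb := by
        rw [hnb]; exact Real.sqrt_pos.mpr hsumpos
      set u : Fin P → ℝ := nb⁻¹ • β with hudef
      have hu : u ⬝ᵥ u = 1 := by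
        simp only [hudef, dotProduct, Pi.smul_apply, smul_eq_mul]
        rw [show ∑ j, nb⁻¹ * β j * (nb⁻¹ * β j) = nb⁻¹ ^ 2 * ∑ j, β j ^ 2 from by
          rw [Finset.mul_sum]; exact Finset.sum_congr rfl fun j _ => by ring, ← hnbsq]
        field_simp
      set M : Matrix (Fin P) (Fin P) ℝ := (z - 1) • vecMulVec u u + 1 with hMdef
      set θ : Fin P → ℝ := z⁻¹ • β with hθdef
      have huθ : u ⬝ᵥ θ = nb * z⁻¹ := by
        simp only [hudef, hθdef, dotProduct, Pi.smul_apply, smul_eq_mul]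
        rw [show ∑ j, nb⁻¹ * β j * (z⁻¹ * β j) = nb⁻¹ * z⁻¹ * ∑ j, β j ^ 2 from by
          rw [Finset.mul_sum]; exact Finset.sum_congr rfl fun j _ => by ring, ← hnbsq]
        field_simp
      have hMθ : M *ᵥ θ = β := by
        funext i
        simp only [hMdef, add_mulVec, smul_mulVec, one_mulVec, Pi.add_apply,
          Pi.smul_apply, smul_eq_mul]
        have hVθ : (vecMulVec u u *ᵥ θ) i = (u ⬝ᵥ θ) * u i := by
          simp only [mulVec, dotProduct, vecMulVec_apply, Finset.sum_mul]
          exact Finset.sum_congr rfl fun k _ => by ring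
        rw [hVθ, huθ]
        simp only [hudef, hθdef, Pi.smul_apply, smul_eq_mul]
        field_simp
        ring
      have hfeasM : ∀ i, (Φ i) *ᵥ (M *ᵥ θ) = y i := fun i => by rw [hMθ]; exact hβ i
      have hval : ω z + (enorm2 β) ^ 2 / z ^ 2 = specPenalty ω M + (enorm2 θ) ^ 2 := by
        rw [hMdef, aux_specPenalty_rankOne ω hω hu hz, hsq P θ]
        congr 1
        rw [show ∑ j, θ j ^ 2 = z⁻¹ ^ 2 * ∑ j, β j ^ 2 from by
          rw [Finset.mul_sum]; exact Finset.sum_congr rfl fun j _ => by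
            simp only [hθdef, Pi.smul_apply, smul_eq_mul]; ring, ← hnbsq]
        rw [hnb]
        field_simp
      show sInf A ≤ ω z + (enorm2 β) ^ 2 / z ^ 2
      rw [hval]
      exact csInf_le hAbd ⟨M, θ, hfeasM, rfl⟩
  · -- sInf B ≤ sInf A
    refine le_csInf hAne ?_
    rintro a ⟨M, θ, hfe, rfl⟩
    set β : Fin P → ℝ := M *ᵥ θ with hβdef
    have hstep : sInf B ≤ effPenalty ω (enorm2 β) := csInf_le hBbd ⟨β, hfe, rfl⟩
    refine hstep.trans ?_
    obtain ⟨j0, -, hmaxmem⟩ := Finset.exists_max_image Finset.univ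
      (Matrix.isHermitian_conjTranspose_mul_self M).eigenvalues ⟨⟨0, hP⟩, Finset.mem_univ _⟩
    have hmax : ∀ j, (Matrix.isHermitian_conjTranspose_mul_self M).eigenvalues j ≤
        (Matrix.isHermitian_conjTranspose_mul_self M).eigenvalues j0 :=
      fun j => hmaxmem j (Finset.mem_univ j)
    set s : ℝ := svals M j0 with hsdef
    have hs0 : 0 ≤ s := Real.sqrt_nonneg _
    have hs2 : s ^ 2 = (Matrix.isHermitian_conjTranspose_mul_self M).eigenvalues j0 :=
      Real.sq_sqrt (Matrix.eigenvalues_conjTranspose_mul_self_nonneg M j0)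
    have hβs : ∑ i, β i ^ 2 ≤ s ^ 2 * ∑ j, θ j ^ 2 := by
      rw [hs2, hβdef]; exact aux_mulVec_sq_le M θ hmax
    have hωs : ω s ≤ specPenalty ω M :=
      Finset.single_le_sum (f := fun j => ω (svals M j)) (fun j _ => hωnn _)
        (Finset.mem_univ j0)
    have hθnn : (0:ℝ) ≤ ∑ j, θ j ^ 2 := Finset.sum_nonneg fun j _ => sq_nonneg _
    rcases le_or_gt 1 s with hs1 | hs1
    · have h4 : effPenalty ω (enorm2 β) ≤ ω s + (enorm2 β) ^ 2 / s ^ 2 :=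
        csInf_le (himgbd _) ⟨s, hs1, rfl⟩
      refine h4.trans ?_
      have hspos : (0:ℝ) < s ^ 2 := pow_pos (lt_of_lt_of_le one_pos hs1) 2
      have h5 : (enorm2 β) ^ 2 / s ^ 2 ≤ (enorm2 θ) ^ 2 := by
        rw [hsq P β, hsq P θ, div_le_iff₀ hspos]
        exact hβs.trans_eq (mul_comm _ _)
      exact add_le_add hωs h5
    · have h4 : effPenalty ω (enorm2 β) ≤ ω 1 + (enorm2 β) ^ 2 / 1 ^ 2 :=
        csInf_le (himgbd _) ⟨1, Set.mem_Ici.mpr le_rfl, rfl⟩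
      rw [hω1, zero_add, one_pow, div_one] at h4
      refine h4.trans ?_
      have hs2le : s ^ 2 ≤ 1 := by nlinarith
      have h5 : (enorm2 β) ^ 2 ≤ (enorm2 θ) ^ 2 := by
        rw [hsq P β, hsq P θ]
        nlinarith
      have := hspnn M
      linarith

end
end

section
/- Let ω be an admissible penalty. Let Φ_1, …, Φ_N be real C×P matrices and y_1, …, y_N ∈ ℝ^C such that the linear system Φ_i β = y_i (for all i) has a solution, let β̂ ∈ ℝ^P be a solution of minimum Euclidean norm, and assume β̂ ≠ 0. Suppose s ≥ 1 satisfies ω(s) + ‖β̂‖₂²/s² = inf_{z ≥ 1} (ω(z) + ‖β̂‖₂²/z²). Then the matrix M̂ = I_P + (s − 1)‖β̂‖₂^{-2} β̂ β̂ᵀ and the vector θ̂ = s^{-1} β̂ satisfy Φ_i M̂ θ̂ = y_i for all i, Ω_ω(M̂) + ‖θ̂‖₂² = ω̃(‖β̂‖₂), and this value equals the infimum of Ω_ω(M) + ‖θ‖₂² over all P×P matrices M and θ ∈ ℝ^P with Φ_i M θ = y_i for all i; that is, (M̂, θ̂) is a minimizer of the relaxed feature-learning problem. -/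
open Matrix Set

noncomputable section

section Helpers

variable {P : ℕ}

lemma enorm2_nonneg (v : Fin P → ℝ) : 0 ≤ enorm2 v := Real.sqrt_nonneg _

lemma enorm2_sq (v : Fin P → ℝ) : enorm2 v ^ 2 = ∑ j, v j ^ 2 :=
  Real.sq_sqrt (Finset.sum_nonneg fun j _ => sq_nonneg _)

lemma svals_nonneg (X : Matrix (Fin P) (Fin P) ℝ) (j : Fin P) : 0 ≤ svals X j :=
  Real.sqrt_nonneg _

lemma effPenalty_le {ω : ℝ → ℝ} (hω : Admissible ω) (v : ℝ) {z : ℝ} (hz : 1 ≤ z) :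
    effPenalty ω v ≤ ω z + v ^ 2 / z ^ 2 := by
  apply csInf_le
  · refine ⟨0, ?_⟩
    rintro x ⟨w, hw, rfl⟩
    exact add_nonneg (hω.1 w) (div_nonneg (sq_nonneg v) (sq_nonneg w))
  · exact ⟨z, hz, rfl⟩

lemma effPenalty_mono {ω : ℝ → ℝ} (hω : Admissible ω) {u v : ℝ} (hu : 0 ≤ u) (huv : u ≤ v) :
    effPenalty ω u ≤ effPenalty ω v := by
  refine le_csInf ⟨ω 1 + v ^ 2 / 1 ^ 2, 1, Set.mem_Ici.mpr le_rfl, rfl⟩ ?_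
  rintro x ⟨z, hz, rfl⟩
  have hz1 : (1:ℝ) ≤ z := hz
  refine le_trans (effPenalty_le hω u hz1) ?_
  have hz0 : (0:ℝ) < z := lt_of_lt_of_le one_pos hz1
  have hp : u ^ 2 ≤ v ^ 2 := pow_le_pow_left₀ hu huv 2
  exact add_le_add_right ((div_le_div_iff_of_pos_right (pow_pos hz0 2)).mpr hp) _

lemma effPenalty_le_omega_add_sq {ω : ℝ → ℝ} (hω : Admissible ω) {σ t : ℝ}
    (hσ : 0 ≤ σ) (ht : 0 ≤ t) : effPenalty ω (σ * t) ≤ ω σ + t ^ 2 := by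
  rcases le_or_gt 1 σ with h | h
  · refine le_trans (effPenalty_le hω _ h) ?_
    have hσ0 : σ ≠ 0 := by linarith
    have he : (σ * t) ^ 2 / σ ^ 2 = t ^ 2 := by
      field_simp
    rw [he]
  · refine le_trans (effPenalty_le hω _ (le_refl (1:ℝ))) ?_
    rw [hω.2.1]
    have he : (σ * t) ^ 2 / (1:ℝ) ^ 2 = σ ^ 2 * t ^ 2 := by ring
    rw [he]
    have h1 : σ ^ 2 * t ^ 2 ≤ t ^ 2 := by
      have hσ1 : σ ^ 2 ≤ 1 := by nlinarith
      calc σ ^ 2 * t ^ 2 ≤ 1 * t ^ 2 := mul_le_mul_of_nonneg_right hσ1 (sq_nonneg t)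
        _ = t ^ 2 := one_mul _
    have h2 := hω.1 σ
    linarith

lemma quad_repr (M : Matrix (Fin P) (Fin P) ℝ) (θ : Fin P → ℝ) :
    ∃ w : Fin P → ℝ,
      (∑ i, ((M *ᵥ θ) i) ^ 2
        = ∑ j, (Matrix.isHermitian_conjTranspose_mul_self M).eigenvalues j * w j ^ 2)
      ∧ ∑ j, w j ^ 2 = ∑ j, θ j ^ 2 := by
  have hA := Matrix.isHermitian_conjTranspose_mul_self M
  set U : Matrix (Fin P) (Fin P) ℝ := (hA.eigenvectorUnitary : Matrix (Fin P) (Fin P) ℝ) with hUdef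
  have hU1 : U * star U = 1 := (Matrix.mem_unitaryGroup_iff).mp hA.eigenvectorUnitary.2
  have hstar : star U = Uᵀ := by
    rw [Matrix.star_eq_conjTranspose, Matrix.conjTranspose_eq_transpose_of_trivial]
  refine ⟨star U *ᵥ θ, ?_, ?_⟩
  · have h1 : ∑ i, ((M *ᵥ θ) i) ^ 2 = θ ⬝ᵥ ((Mᴴ * M) *ᵥ θ) := by
      rw [Matrix.conjTranspose_eq_transpose_of_trivial, ← Matrix.mulVec_mulVec,
        Matrix.dotProduct_mulVec, Matrix.vecMul_transpose]
      simp [dotProduct, sq]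
    rw [h1]
    conv_lhs => rw [hA.spectral_theorem, Unitary.conjStarAlgAut_apply]
    rw [← Matrix.mulVec_mulVec, ← Matrix.mulVec_mulVec, Matrix.dotProduct_mulVec]
    have hvm : θ ᵥ* U = star U *ᵥ θ := by
      rw [hstar, ← Matrix.transpose_transpose U, Matrix.vecMul_transpose,
        Matrix.transpose_transpose]
    rw [hvm]
    simp only [dotProduct, Matrix.mulVec_diagonal, Function.comp_apply,
      RCLike.ofReal_real_eq_id, id_eq]
    exact Finset.sum_congr rfl fun j _ => by ring
  · have key : (star U *ᵥ θ) ⬝ᵥ (star U *ᵥ θ) = θ ⬝ᵥ θ := by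
      rw [Matrix.dotProduct_mulVec]
      have h2 : (star U *ᵥ θ) ᵥ* star U = (U * star U) *ᵥ θ := by
        rw [hstar, Matrix.vecMul_transpose, Matrix.mulVec_mulVec, ← hstar]
      rw [h2, hU1, Matrix.one_mulVec]
    simpa [dotProduct, pow_two] using key

lemma mulVec_le_sval (hP : 0 < P) (M : Matrix (Fin P) (Fin P) ℝ) (θ : Fin P → ℝ) :
    ∃ j, enorm2 (M *ᵥ θ) ≤ svals M j * enorm2 θ := by
  have : Nonempty (Fin P) := ⟨⟨0, hP⟩⟩
  obtain ⟨w, hw1, hw2⟩ := quad_repr M θ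
  set lam := (Matrix.isHermitian_conjTranspose_mul_self M).eigenvalues with hlamdef
  obtain ⟨j₀, hj₀⟩ := Finite.exists_max lam
  have hps : (Mᴴ * M).PosSemidef := Matrix.posSemidef_conjTranspose_mul_self M
  have hlam0 : ∀ j, 0 ≤ lam j := fun j => hps.eigenvalues_nonneg j
  refine ⟨j₀, ?_⟩
  have hsum : ∑ i, ((M *ᵥ θ) i) ^ 2 ≤ (svals M j₀ * enorm2 θ) ^ 2 := by
    rw [hw1]
    have hle : ∑ j, lam j * w j ^ 2 ≤ ∑ j, lam j₀ * w j ^ 2 :=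
      Finset.sum_le_sum fun j _ => mul_le_mul_of_nonneg_right (hj₀ j) (sq_nonneg _)
    refine le_trans hle ?_
    rw [← Finset.mul_sum, hw2, mul_pow, enorm2_sq]
    have hsv : svals M j₀ ^ 2 = lam j₀ := Real.sq_sqrt (hlam0 j₀)
    rw [hsv]
  have hnn : 0 ≤ svals M j₀ * enorm2 θ := mul_nonneg (svals_nonneg M j₀) (enorm2_nonneg _)
  calc enorm2 (M *ᵥ θ) = Real.sqrt (∑ i, ((M *ᵥ θ) i) ^ 2) := rfl
    _ ≤ Real.sqrt ((svals M j₀ * enorm2 θ) ^ 2) := Real.sqrt_le_sqrt hsum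
    _ = svals M j₀ * enorm2 θ := Real.sqrt_sq hnn

lemma lower_bound {ω : ℝ → ℝ} (hω : Admissible ω) (hP : 0 < P)
    (M : Matrix (Fin P) (Fin P) ℝ) (θ : Fin P → ℝ) {b : ℝ} (hb : 0 ≤ b)
    (hble : b ≤ enorm2 (M *ᵥ θ)) :
    effPenalty ω b ≤ specPenalty ω M + enorm2 θ ^ 2 := by
  obtain ⟨j, hj⟩ := mulVec_le_sval hP M θ
  have h1 : effPenalty ω b ≤ effPenalty ω (svals M j * enorm2 θ) :=
    effPenalty_mono hω hb (le_trans hble hj)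
  have h2 := effPenalty_le_omega_add_sq hω (svals_nonneg M j) (enorm2_nonneg θ)
  have h3 : ω (svals M j) ≤ specPenalty ω M :=
    Finset.single_le_sum (fun i _ => hω.1 _) (Finset.mem_univ j)
  linarith

lemma vecMulVec_mulVec' (β x : Fin P → ℝ) :
    Matrix.vecMulVec β β *ᵥ x = (β ⬝ᵥ x) • β := by
  ext i
  simp only [Matrix.mulVec, dotProduct, Matrix.vecMulVec_apply, Pi.smul_apply,
    smul_eq_mul, Finset.sum_mul]
  exact Finset.sum_congr rfl fun k _ => by ring

lemma sumsq_pos {β : Fin P → ℝ} (hβ : β ≠ 0) : 0 < ∑ j, β j ^ 2 := by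
  obtain ⟨i, hi⟩ := Function.ne_iff.mp hβ
  exact Finset.sum_pos' (fun j _ => sq_nonneg _) ⟨i, Finset.mem_univ i, lt_of_le_of_ne (sq_nonneg _) (Ne.symm (pow_ne_zero 2 hi))⟩

/-- eigenvalues of `Mᴴ M`. -/
def lamOf (M : Matrix (Fin P) (Fin P) ℝ) : Fin P → ℝ :=
  (Matrix.isHermitian_conjTranspose_mul_self M).eigenvalues

/-- eigenvectors of `Mᴴ M`. -/
def uOf (M : Matrix (Fin P) (Fin P) ℝ) (j : Fin P) : Fin P → ℝ :=
  ⇑((Matrix.isHermitian_conjTranspose_mul_self M).eigenvectorBasis j)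

lemma svals_eq (M : Matrix (Fin P) (Fin P) ℝ) (j : Fin P) :
    svals M j = Real.sqrt (lamOf M j) := rfl

lemma eig_mulVec (M : Matrix (Fin P) (Fin P) ℝ) (j : Fin P) :
    (Mᴴ * M) *ᵥ uOf M j = lamOf M j • uOf M j :=
  (Matrix.isHermitian_conjTranspose_mul_self M).mulVec_eigenvectorBasis j

lemma uOf_dot (M : Matrix (Fin P) (Fin P) ℝ) (i j : Fin P) :
    uOf M i ⬝ᵥ uOf M j = if i = j then (1:ℝ) else 0 := by
  have horth := (Matrix.isHermitian_conjTranspose_mul_self M).eigenvectorBasis.orthonormal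
  rw [orthonormal_iff_ite] at horth
  have h := horth i j
  simpa [PiLp.inner_apply, RCLike.inner_apply, conj_trivial, dotProduct, uOf, mul_comm] using h

lemma spec_rank_one {ω : ℝ → ℝ} (hω : Admissible ω) {β : Fin P → ℝ} (hβ : β ≠ 0)
    {s : ℝ} (hs : 1 ≤ s) :
    specPenalty ω ((1 : Matrix (Fin P) (Fin P) ℝ) +
      ((s - 1) / (enorm2 β) ^ 2) • Matrix.vecMulVec β β) = ω s := by
  set Bsq := ∑ j, β j ^ 2 with hBsqdef
  have hBpos : 0 < Bsq := sumsq_pos hβ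
  have hB2 : enorm2 β ^ 2 = Bsq := enorm2_sq β
  set V := Matrix.vecMulVec β β with hVdef
  set M := (1 : Matrix (Fin P) (Fin P) ℝ) + ((s - 1) / (enorm2 β) ^ 2) • V with hMdef
  set d := (s ^ 2 - 1) / Bsq with hddef
  set c := (s - 1) / (enorm2 β) ^ 2 with hcdef
  have hc : c = (s - 1) / Bsq := by rw [hcdef, hB2]
  have hd0 : 0 ≤ d := div_nonneg (by nlinarith) hBpos.le
  have hβdot : β ⬝ᵥ β = Bsq := by simp [dotProduct, hBsqdef, sq]
  have hVV : V * V = Bsq • V := by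
    ext i j
    simp only [hVdef, Matrix.mul_apply, Matrix.vecMulVec_apply, Matrix.smul_apply, smul_eq_mul]
    rw [Finset.sum_congr rfl
      (fun k _ => show β i * β k * (β k * β j) = (β i * β j) * β k ^ 2 by ring),
      ← Finset.mul_sum]
    ring
  have hMH : Mᴴ = M := by
    rw [hMdef, Matrix.conjTranspose_eq_transpose_of_trivial, Matrix.transpose_add,
      Matrix.transpose_one, Matrix.transpose_smul]
    have : Vᵀ = V := by
      ext i j
      simp [hVdef, Matrix.transpose_apply, Matrix.vecMulVec_apply, mul_comm]
    rw [this]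
  have hMM : Mᴴ * M = 1 + d • V := by
    rw [hMH, hMdef]
    rw [add_mul, one_mul, mul_add, mul_one, Matrix.smul_mul, Matrix.mul_smul, smul_smul, hVV,
      smul_smul]
    have hsc : c + (c + c * c * Bsq) = d := by
      rw [hc, hddef]; field_simp; ring
    rw [add_assoc, ← add_smul, ← add_smul]
    rw [show c + (c + c * c * Bsq) = d from hsc]
  have heig : ∀ j, uOf M j + (d * (β ⬝ᵥ uOf M j)) • β = lamOf M j • uOf M j := by
    intro j
    have h := eig_mulVec M j
    rwa [hMM, Matrix.add_mulVec, Matrix.one_mulVec, Matrix.smul_mulVec,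
      vecMulVec_mulVec', smul_smul] at h
  have hnorm1 : ∀ j, uOf M j ⬝ᵥ uOf M j = 1 := fun j => by simpa using uOf_dot M j j
  have hlam_eq : ∀ j, lamOf M j = 1 + d * (β ⬝ᵥ uOf M j) ^ 2 := by
    intro j
    have h := congrArg (fun x => uOf M j ⬝ᵥ x) (heig j)
    simp only [dotProduct_add, dotProduct_smul, smul_eq_mul] at h
    rw [hnorm1 j, dotProduct_comm (uOf M j) β] at h
    rw [mul_one] at h
    rw [sq]; linarith
  rcases eq_or_lt_of_le hs with hseq | hslt
  · -- s = 1
    have hd : d = 0 := by rw [hddef, ← hseq]; norm_num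
    have hall : ∀ j, lamOf M j = 1 := fun j => by rw [hlam_eq j, hd]; ring
    simp only [specPenalty, svals_eq]
    have : ∀ j : Fin P, ω (Real.sqrt (lamOf M j)) = 0 := fun j => by
      rw [hall j, Real.sqrt_one, hω.2.1]
    rw [Finset.sum_congr rfl fun j _ => this j, Finset.sum_const, smul_zero, ← hseq, hω.2.1]
  · -- s > 1
    have hd : 0 < d := div_pos (by nlinarith) hBpos
    have parallel : ∀ j, lamOf M j ≠ 1 → ∃ cj : ℝ, cj ≠ 0 ∧ uOf M j = cj • β := by
      intro j hj
      have h2 : (lamOf M j - 1) • uOf M j = (d * (β ⬝ᵥ uOf M j)) • β := by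
        rw [sub_smul, one_smul, ← heig j]; abel
      have hne : lamOf M j - 1 ≠ 0 := sub_ne_zero.mpr hj
      set cj := (lamOf M j - 1)⁻¹ * (d * (β ⬝ᵥ uOf M j)) with hcjdef
      have h3 : uOf M j = cj • β := by
        rw [hcjdef, ← smul_smul, ← h2, smul_smul, inv_mul_cancel₀ hne, one_smul]
      refine ⟨cj, ?_, h3⟩
      intro hcj0
      have h4 := hnorm1 j
      rw [h3, hcj0, zero_smul] at h4
      simp [dotProduct] at h4
    have huniq : ∀ j k, lamOf M j ≠ 1 → lamOf M k ≠ 1 → j = k := by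
      intro j k hj hk
      by_contra hjk
      obtain ⟨cj, hcj0, hcj⟩ := parallel j hj
      obtain ⟨ck, hck0, hck⟩ := parallel k hk
      have h0 := uOf_dot M j k
      rw [if_neg hjk, hcj, hck] at h0
      simp [smul_dotProduct, dotProduct_smul, smul_eq_mul, hβdot, mul_eq_zero,
        hcj0, hck0, hBpos.ne'] at h0
    have hex : ∃ j₀, lamOf M j₀ ≠ 1 := by
      by_contra hall
      push_neg at hall
      have hdiag : Matrix.diagonal (RCLike.ofReal ∘ lamOf M) = (1 : Matrix (Fin P) (Fin P) ℝ) := by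
        ext i j
        rcases eq_or_ne i j with rfl | hij
        · simp [Matrix.diagonal_apply_eq, Matrix.one_apply_eq, hall i]
        · simp [Matrix.diagonal_apply_ne _ hij, Matrix.one_apply_ne hij]
      have hUU : ((Matrix.isHermitian_conjTranspose_mul_self M).eigenvectorUnitary :
            Matrix (Fin P) (Fin P) ℝ) *
          star ((Matrix.isHermitian_conjTranspose_mul_self M).eigenvectorUnitary :
            Matrix (Fin P) (Fin P) ℝ) = 1 :=
        (Matrix.mem_unitaryGroup_iff).mp (Matrix.isHermitian_conjTranspose_mul_self M).eigenvectorUnitary.2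
      have hsp := (Matrix.isHermitian_conjTranspose_mul_self M).spectral_theorem
      rw [show (Matrix.isHermitian_conjTranspose_mul_self M).eigenvalues = lamOf M from rfl] at hsp
      rw [Unitary.conjStarAlgAut_apply] at hsp
      rw [hdiag, mul_one, hUU, hMM] at hsp
      have hdV : d • V = 0 := by
        have := hsp
        rwa [add_eq_left] at this
      obtain ⟨i, hi⟩ := Function.ne_iff.mp hβ
      have h5 : d * (β i * β i) = 0 := by
        have := congrFun (congrFun hdV i) i
        simpa [hVdef, Matrix.smul_apply, Matrix.vecMulVec_apply] using this
      exact (mul_ne_zero hd.ne' (mul_ne_zero hi hi)) h5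
    obtain ⟨j₀, hj₀⟩ := hex
    obtain ⟨cj, hcj0, hcj⟩ := parallel j₀ hj₀
    have hAβ : (1 + d • V) *ᵥ β = (s ^ 2) • β := by
      rw [Matrix.add_mulVec, Matrix.one_mulVec, Matrix.smul_mulVec, vecMulVec_mulVec',
        hβdot, smul_smul]
      have hdb : d * Bsq = s ^ 2 - 1 := by rw [hddef]; field_simp
      rw [hdb]
      module
    have heq2 : lamOf M j₀ • uOf M j₀ = (s ^ 2) • uOf M j₀ := by
      have h := eig_mulVec M j₀
      rw [hMM] at h
      rw [← h, hcj, Matrix.mulVec_smul, hAβ, smul_comm]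
    have hu0 : uOf M j₀ ≠ 0 := by
      intro h0
      have := hnorm1 j₀
      rw [h0] at this
      simp [dotProduct] at this
    have hlj : lamOf M j₀ = s ^ 2 := by
      obtain ⟨i, hi⟩ := Function.ne_iff.mp hu0
      have h6 := congrFun heq2 i
      simp only [Pi.smul_apply, smul_eq_mul] at h6
      exact mul_right_cancel₀ hi h6
    simp only [specPenalty, svals_eq]
    have hmain : ∑ j, ω (Real.sqrt (lamOf M j)) = ω (Real.sqrt (lamOf M j₀)) := by
      refine Finset.sum_eq_single j₀ (fun j _ hj => ?_) (fun h => absurd (Finset.mem_univ _) h)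
      have : lamOf M j = 1 := by_contra fun hne => hj (huniq j j₀ hne hj₀)
      rw [this, Real.sqrt_one, hω.2.1]
    rw [hmain, hlj, Real.sqrt_sq (le_trans zero_le_one hs)]

end Helpers

/-- Theorem 1 of the paper. The explicit rank-one-perturbation solution of the
structureless adaptive feature learning problem. -/
theorem structureless_solution
    {N C P : ℕ} (ω : ℝ → ℝ) (hω : Admissible ω)
    (Φ : Fin N → Matrix (Fin C) (Fin P) ℝ) (y : Fin N → Fin C → ℝ)
    (βh : Fin P → ℝ)
    (hsol : ∀ i, (Φ i) *ᵥ βh = y i)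
    (hmin : ∀ β : Fin P → ℝ, (∀ i, (Φ i) *ᵥ β = y i) → enorm2 βh ≤ enorm2 β)
    (hβ : βh ≠ 0)
    (s : ℝ) (hs : 1 ≤ s)
    (hsopt : ω s + (enorm2 βh) ^ 2 / s ^ 2 = effPenalty ω (enorm2 βh)) :
    let M := (1 : Matrix (Fin P) (Fin P) ℝ) +
      ((s - 1) / (enorm2 βh) ^ 2) • Matrix.vecMulVec βh βh
    let θ := s⁻¹ • βh
    (∀ i, (Φ i) *ᵥ (M *ᵥ θ) = y i) ∧
    specPenalty ω M + (enorm2 θ) ^ 2 = effPenalty ω (enorm2 βh) ∧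
    effPenalty ω (enorm2 βh) =
      sInf {v : ℝ | ∃ (M' : Matrix (Fin P) (Fin P) ℝ) (θ' : Fin P → ℝ),
        (∀ i, (Φ i) *ᵥ (M' *ᵥ θ') = y i) ∧ v = specPenalty ω M' + (enorm2 θ') ^ 2} := by
  intro M θ
  have hP : 0 < P := by
    rcases Nat.eq_zero_or_pos P with h0 | h
    · exfalso
      apply hβ
      funext i
      exact absurd i.2 (by omega)
    · exact h
  have hBpos : 0 < ∑ j, βh j ^ 2 := sumsq_pos hβ
  have hB2 : enorm2 βh ^ 2 = ∑ j, βh j ^ 2 := enorm2_sq βh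
  have hs0 : (0:ℝ) < s := lt_of_lt_of_le one_pos hs
  have hβdot : βh ⬝ᵥ βh = ∑ j, βh j ^ 2 := by simp [dotProduct, sq]
  have hMθ : M *ᵥ θ = βh := by
    show ((1 : Matrix (Fin P) (Fin P) ℝ) +
        ((s - 1) / (enorm2 βh) ^ 2) • Matrix.vecMulVec βh βh) *ᵥ (s⁻¹ • βh) = βh
    rw [Matrix.mulVec_smul, Matrix.add_mulVec, Matrix.one_mulVec, Matrix.smul_mulVec,
      vecMulVec_mulVec', hβdot, smul_smul, hB2]
    have hcc : (s - 1) / (∑ j, βh j ^ 2) * (∑ j, βh j ^ 2) = s - 1 := by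
      field_simp
    rw [hcc]
    have hsm : βh + (s - 1) • βh = s • βh := by module
    rw [hsm, smul_smul, inv_mul_cancel₀ (ne_of_gt hs0), one_smul]
  have hfeas : ∀ i, Φ i *ᵥ (M *ᵥ θ) = y i := fun i => by rw [hMθ]; exact hsol i
  have hθ2 : enorm2 θ ^ 2 = (∑ j, βh j ^ 2) / s ^ 2 := by
    show enorm2 (s⁻¹ • βh) ^ 2 = _
    rw [enorm2_sq]
    simp only [Pi.smul_apply, smul_eq_mul, mul_pow, ← Finset.mul_sum]
    rw [inv_pow, inv_mul_eq_div]
  have hpart2 : specPenalty ω M + (enorm2 θ) ^ 2 = effPenalty ω (enorm2 βh) := by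
    show specPenalty ω ((1 : Matrix (Fin P) (Fin P) ℝ) +
        ((s - 1) / (enorm2 βh) ^ 2) • Matrix.vecMulVec βh βh) + (enorm2 θ) ^ 2 = _
    rw [spec_rank_one hω hβ hs, hθ2, ← hsopt, hB2]
  refine ⟨hfeas, hpart2, ?_⟩
  have hmem : specPenalty ω M + (enorm2 θ) ^ 2 ∈
      {v : ℝ | ∃ (M' : Matrix (Fin P) (Fin P) ℝ) (θ' : Fin P → ℝ),
        (∀ i, (Φ i) *ᵥ (M' *ᵥ θ') = y i) ∧ v = specPenalty ω M' + (enorm2 θ') ^ 2} :=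
    ⟨M, θ, hfeas, rfl⟩
  have hlb : ∀ v ∈ {v : ℝ | ∃ (M' : Matrix (Fin P) (Fin P) ℝ) (θ' : Fin P → ℝ),
        (∀ i, (Φ i) *ᵥ (M' *ᵥ θ') = y i) ∧ v = specPenalty ω M' + (enorm2 θ') ^ 2},
      effPenalty ω (enorm2 βh) ≤ v := by
    rintro v ⟨M', θ', hfeas', rfl⟩
    exact lower_bound hω hP M' θ' (enorm2_nonneg βh) (hmin _ hfeas')
  refine le_antisymm (le_csInf ⟨_, hmem⟩ hlb) ?_
  calc sInf _ ≤ specPenalty ω M + (enorm2 θ) ^ 2 := csInf_le ⟨_, hlb⟩ hmem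
    _ = effPenalty ω (enorm2 βh) := hpart2
end
end

section
/- Let ω₁ and ω₂ be admissible penalties that are continuous. Then the joint penalty ω₁ ⊕ ω₂ satisfies (ω₁ ⊕ ω₂)(1) = 0 and is strictly increasing on [1, ∞): for all 1 ≤ v₁ < v₂, (ω₁ ⊕ ω₂)(v₁) < (ω₁ ⊕ ω₂)(v₂). -/
open Matrix Set

noncomputable section

/-- Proposition 2 of the paper. The joint penalty of two continuous admissible
penalties vanishes at `1` and is strictly increasing on `[1, ∞)`. -/
theorem jointPenalty_strictMono (ω₁ ω₂ : ℝ → ℝ)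
    (hω₁ : Admissible ω₁) (hω₂ : Admissible ω₂)
    (hc₁ : Continuous ω₁) (hc₂ : Continuous ω₂) :
    jointPenalty ω₁ ω₂ 1 = 0 ∧
    ∀ v₁ v₂ : ℝ, 1 ≤ v₁ → v₁ < v₂ → jointPenalty ω₁ ω₂ v₁ < jointPenalty ω₁ ω₂ v₂ := by
  obtain ⟨h1nn, h11, h1anti, h1mono⟩ := hω₁
  obtain ⟨h2nn, h21, h2anti, h2mono⟩ := hω₂
  constructor
  · have : Set.Icc (1:ℝ) 1 = {1} := Set.Icc_self 1
    simp [jointPenalty, this, h11, h21]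
  · intro v₁ v₂ hv₁ hlt
    have hv₂ : (1:ℝ) ≤ v₂ := le_trans hv₁ hlt.le
    -- inf over [1, v₂] attained
    have hK : IsCompact (Set.Icc (1:ℝ) v₂) := isCompact_Icc
    have hne : (Set.Icc (1:ℝ) v₂).Nonempty := ⟨1, le_refl 1, hv₂⟩
    have hcont : ContinuousOn (fun z => ω₁ z + ω₂ (v₂ / z)) (Set.Icc (1:ℝ) v₂) := by
      apply ContinuousOn.add hc₁.continuousOn
      apply hc₂.comp_continuousOn
      apply ContinuousOn.div continuousOn_const continuousOn_id
      intro z hz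
      exact ne_of_gt (lt_of_lt_of_le one_pos hz.1)
    obtain ⟨z, hz, hzmin⟩ := hK.exists_sInf_image_eq hne hcont
    have hjv₂ : jointPenalty ω₁ ω₂ v₂ = ω₁ z + ω₂ (v₂ / z) := hzmin
    have hz1 : (1:ℝ) ≤ z := hz.1
    have hz0 : (0:ℝ) < z := lt_of_lt_of_le one_pos hz1
    -- bound jointPenalty v₁ ≤ value at any feasible point
    have hbdd : BddBelow ((fun z => ω₁ z + ω₂ (v₁ / z)) '' Set.Icc (1:ℝ) v₁) := by
      refine ⟨0, ?_⟩
      rintro x ⟨w, _, rfl⟩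
      exact add_nonneg (h1nn w) (h2nn _)
    have hle : ∀ w ∈ Set.Icc (1:ℝ) v₁,
        jointPenalty ω₁ ω₂ v₁ ≤ ω₁ w + ω₂ (v₁ / w) := fun w hw =>
      csInf_le hbdd ⟨w, hw, rfl⟩
    rcases le_or_gt z v₁ with hcase | hcase
    · -- z feasible for v₁
      have h1 : jointPenalty ω₁ ω₂ v₁ ≤ ω₁ z + ω₂ (v₁ / z) := hle z ⟨hz1, hcase⟩
      have hd : v₁ / z < v₂ / z := by
        apply div_lt_div_of_pos_right hlt hz0
      have hlt2 : ω₂ (v₁ / z) < ω₂ (v₂ / z) :=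
        h2mono ((one_le_div hz0).mpr hcase) (le_trans ((one_le_div hz0).mpr hcase) hd.le) hd
      calc jointPenalty ω₁ ω₂ v₁ ≤ ω₁ z + ω₂ (v₁ / z) := h1
        _ < ω₁ z + ω₂ (v₂ / z) := by linarith
        _ = jointPenalty ω₁ ω₂ v₂ := hjv₂.symm
    · -- z > v₁, take w = v₁
      have h1 : jointPenalty ω₁ ω₂ v₁ ≤ ω₁ v₁ + ω₂ (v₁ / v₁) := hle v₁ ⟨hv₁, le_refl _⟩
      have hvv : v₁ / v₁ = 1 := div_self (by linarith)
      have hlt1 : ω₁ v₁ < ω₁ z := h1mono hv₁ (Set.mem_Ici.mpr hz1) hcase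
      have h2 : 0 ≤ ω₂ (v₂ / z) := h2nn _
      calc jointPenalty ω₁ ω₂ v₁ ≤ ω₁ v₁ + ω₂ (v₁ / v₁) := h1
        _ = ω₁ v₁ := by rw [hvv, h21]; ring
        _ < ω₁ z + ω₂ (v₂ / z) := by linarith
        _ = jointPenalty ω₁ ω₂ v₂ := hjv₂.symm
end
end

section
/- Let ω be an admissible penalty and β ∈ ℝ^P. Then the infimum of Σ_{j=1}^P (ω(|m_j|) + θ_j²) over all m, θ ∈ ℝ^P satisfying m_j θ_j = β_j for every j equals Σ_{j=1}^P ω̃(|β_j|). (Diagonal feature transformations yield the coordinate-wise effective penalty, a sparsity-type regularizer.) -/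
open Matrix Set

noncomputable section

lemma effPen_bddBelow (ω : ℝ → ℝ) (hω : Admissible ω) (b : ℝ) :
    BddBelow ((fun z => ω z + b ^ 2 / z ^ 2) '' Set.Ici (1 : ℝ)) := by
  refine ⟨0, ?_⟩
  rintro x ⟨z, hz, rfl⟩
  have hz0 : (0:ℝ) < z := lt_of_lt_of_le one_pos hz
  have : 0 ≤ b ^ 2 / z ^ 2 := div_nonneg (sq_nonneg b) (by positivity)
  exact add_nonneg (hω.1 z) this

lemma effPen_le (ω : ℝ → ℝ) (hω : Admissible ω) (b z : ℝ) (hz : 1 ≤ z) :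
    effPenalty ω |b| ≤ ω z + b ^ 2 / z ^ 2 := by
  have hmem : ω z + |b| ^ 2 / z ^ 2 ∈
      (fun z => ω z + |b| ^ 2 / z ^ 2) '' Set.Ici (1 : ℝ) := ⟨z, hz, rfl⟩
  have := csInf_le (effPen_bddBelow ω hω |b|) hmem
  simpa [effPenalty, sq_abs] using this

lemma effPen_le_pair (ω : ℝ → ℝ) (hω : Admissible ω) (m θ : ℝ) :
    effPenalty ω |m * θ| ≤ ω |m| + θ ^ 2 := by
  rcases le_or_gt 1 |m| with hm | hm
  · have hm0 : m ≠ 0 := by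
      intro h; rw [h, abs_zero] at hm; linarith
    have h := effPen_le ω hω (m * θ) |m| hm
    have hsq : (m * θ) ^ 2 / |m| ^ 2 = θ ^ 2 := by
      rw [sq_abs, mul_pow, mul_comm, mul_div_assoc, div_self (pow_ne_zero 2 hm0), mul_one]
    rwa [hsq] at h
  · have h := effPen_le ω hω (m * θ) 1 le_rfl
    have hm2 : m ^ 2 ≤ 1 := by
      have := sq_abs m
      nlinarith [abs_nonneg m]
    have : (m * θ) ^ 2 / 1 ^ 2 ≤ θ ^ 2 := by
      rw [one_pow, div_one, mul_pow]
      nlinarith [sq_nonneg θ]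
    calc effPenalty ω |m * θ| ≤ ω 1 + (m * θ) ^ 2 / 1 ^ 2 := h
      _ ≤ 0 + θ ^ 2 := by rw [hω.2.1]; linarith
      _ ≤ ω |m| + θ ^ 2 := by linarith [hω.1 |m|]

/-- With diagonal feature transformations, the joint optimization yields the
coordinate-wise effective penalty `Σ_j ω̃(|β_j|)`. -/
theorem diagonal_effective_penalty {P : ℕ} (ω : ℝ → ℝ) (hω : Admissible ω) (β : Fin P → ℝ) :
    sInf {t : ℝ | ∃ m θ : Fin P → ℝ, (∀ j, m j * θ j = β j) ∧
        t = ∑ j, (ω |m j| + θ j ^ 2)} =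
      ∑ j, effPenalty ω |β j| := by
  set S := {t : ℝ | ∃ m θ : Fin P → ℝ, (∀ j, m j * θ j = β j) ∧
      t = ∑ j, (ω |m j| + θ j ^ 2)} with hS
  have hne : S.Nonempty :=
    ⟨∑ j, (ω |(1:ℝ)| + β j ^ 2), fun _ => 1, β, fun j => one_mul _, rfl⟩
  apply le_antisymm
  · -- sInf S ≤ ∑ effPenalty
    apply le_of_forall_pos_le_add
    intro ε hε
    have hz : ∀ j : Fin P, ∃ z, 1 ≤ z ∧
        ω z + β j ^ 2 / z ^ 2 < effPenalty ω |β j| + ε / P := by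
      intro j
      have hP : (0:ℝ) < P := by exact_mod_cast j.pos
      have hε' : 0 < ε / P := div_pos hε hP
      have hne' : ((fun z => ω z + |β j| ^ 2 / z ^ 2) '' Set.Ici (1 : ℝ)).Nonempty :=
        ⟨_, ⟨1, Set.mem_Ici.2 le_rfl, rfl⟩⟩
      obtain ⟨a, ⟨z, hz1, rfl⟩, ha⟩ := Real.lt_sInf_add_pos hne' hε'
      exact ⟨z, hz1, by simpa [effPenalty, sq_abs] using ha⟩
    choose z hz1 hz2 using hz
    have hz0 : ∀ j, z j ≠ 0 := fun j => ne_of_gt (lt_of_lt_of_le one_pos (hz1 j))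
    have hmem : (∑ j, (ω |z j| + (β j / z j) ^ 2)) ∈ S := by
      refine ⟨z, fun j => β j / z j, fun j => ?_, rfl⟩
      rw [mul_div_assoc', mul_comm, mul_div_assoc, div_self (hz0 j), mul_one]
    have hstep : sInf S ≤ ∑ j, (ω |z j| + (β j / z j) ^ 2) :=
      csInf_le ⟨0, by
        rintro x ⟨m, θ, hmθ, rfl⟩
        exact Finset.sum_nonneg fun j _ => add_nonneg (hω.1 _) (sq_nonneg _)⟩ hmem
    have hsum : ∑ j, (ω |z j| + (β j / z j) ^ 2)
        ≤ (∑ j, effPenalty ω |β j|) + (P : ℝ) * (ε / P) := by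
      have : ∀ j : Fin P, ω |z j| + (β j / z j) ^ 2
          ≤ effPenalty ω |β j| + ε / P := by
        intro j
        have habs : |z j| = z j := abs_of_pos (lt_of_lt_of_le one_pos (hz1 j))
        have := (hz2 j).le
        rw [habs, div_pow]
        linarith
      calc ∑ j, (ω |z j| + (β j / z j) ^ 2)
          ≤ ∑ j : Fin P, (effPenalty ω |β j| + ε / P) :=
            Finset.sum_le_sum fun j _ => this j
        _ = (∑ j, effPenalty ω |β j|) + (P : ℝ) * (ε / P) := by
            rw [Finset.sum_add_distrib, Finset.sum_const]
            simp [mul_comm]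
    have hPe : (P : ℝ) * (ε / P) ≤ ε := by
      rcases Nat.eq_zero_or_pos P with h | h
      · simp [h]; positivity
      · have : (0:ℝ) < P := by exact_mod_cast h
        rw [mul_div_cancel₀ _ (ne_of_gt this)]
    linarith
  · -- ∑ effPenalty ≤ sInf S
    apply le_csInf hne
    rintro t ⟨m, θ, hmθ, rfl⟩
    refine Finset.sum_le_sum fun j _ => ?_
    have := effPen_le_pair ω hω (m j) (θ j)
    rwa [hmθ j] at this
end
end

section
/- Let M be a real P×P matrix with singular value decomposition M = U S Vᵀ, where U and V are P×P orthogonal matrices and S is diagonal with nonnegative entries, and let θ ∈ ℝ^P. Define M' = U S Uᵀ and θ' = U Vᵀ θ. Then M' θ' = M θ, ‖θ'‖₂ = ‖θ‖₂, M' is symmetric positive semidefinite, and M' has the same singular values as M (hence Ω_ω(M') = Ω_ω(M) for any penalty ω applied to singular values). Therefore the joint optimization over (M, θ) may be restricted to symmetric positive semidefinite M without loss of generality. -/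
open Matrix Set

noncomputable section

section Aux

open Polynomial

/-- Characteristic polynomial is invariant under orthogonal conjugation. -/
lemma charpoly_conj_aux {n : ℕ} (W A : Matrix (Fin n) (Fin n) ℝ)
    (hW : W * Wᵀ = 1) : (W * A * Wᵀ).charpoly = A.charpoly := by
  have hW1 : (C : ℝ →+* ℝ[X]).mapMatrix W * (C : ℝ →+* ℝ[X]).mapMatrix Wᵀ = 1 := by
    rw [← RingHom.map_mul, hW, RingHom.map_one]
  have hscalar : (Matrix.scalar (Fin n)) (X : ℝ[X])
      = (X : ℝ[X]) • (1 : Matrix (Fin n) (Fin n) ℝ[X]) := by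
    simp [Matrix.scalar, Matrix.smul_eq_diagonal_mul]
  have hsc : (C : ℝ →+* ℝ[X]).mapMatrix W * (Matrix.scalar (Fin n) (X : ℝ[X]))
      * (C : ℝ →+* ℝ[X]).mapMatrix Wᵀ = Matrix.scalar (Fin n) (X : ℝ[X]) := by
    rw [hscalar, mul_smul_comm, mul_one, smul_mul_assoc, hW1]
  have hmap : (C : ℝ →+* ℝ[X]).mapMatrix (W * A * Wᵀ)
      = (C : ℝ →+* ℝ[X]).mapMatrix W * (C : ℝ →+* ℝ[X]).mapMatrix A
        * (C : ℝ →+* ℝ[X]).mapMatrix Wᵀ := by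
    rw [RingHom.map_mul, RingHom.map_mul]
  have key : charmatrix (W * A * Wᵀ) =
      (C : ℝ →+* ℝ[X]).mapMatrix W * charmatrix A * (C : ℝ →+* ℝ[X]).mapMatrix Wᵀ := by
    show Matrix.scalar (Fin n) (X : ℝ[X]) - (C : ℝ →+* ℝ[X]).mapMatrix (W * A * Wᵀ)
      = (C : ℝ →+* ℝ[X]).mapMatrix W
        * (Matrix.scalar (Fin n) (X : ℝ[X]) - (C : ℝ →+* ℝ[X]).mapMatrix A)
        * (C : ℝ →+* ℝ[X]).mapMatrix Wᵀ
    rw [hmap]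
    conv_lhs => rw [← hsc]
    noncomm_ring
  have hdet1 : ((C : ℝ →+* ℝ[X]).mapMatrix W).det * ((C : ℝ →+* ℝ[X]).mapMatrix Wᵀ).det = 1 := by
    rw [← Matrix.det_mul, hW1, Matrix.det_one]
  unfold Matrix.charpoly
  rw [key, Matrix.det_mul, Matrix.det_mul]
  calc ((C : ℝ →+* ℝ[X]).mapMatrix W).det * (charmatrix A).det
        * ((C : ℝ →+* ℝ[X]).mapMatrix Wᵀ).det
      = ((C : ℝ →+* ℝ[X]).mapMatrix W).det * ((C : ℝ →+* ℝ[X]).mapMatrix Wᵀ).det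
        * (charmatrix A).det := by ring
    _ = (charmatrix A).det := by rw [hdet1, one_mul]

lemma charpoly_diagonal_aux {n : ℕ} (d : Fin n → ℝ) :
    (Matrix.diagonal d).charpoly = ∏ i, (X - C (d i)) := by
  have h : charmatrix (Matrix.diagonal d) = Matrix.diagonal (fun i => (X : ℝ[X]) - C (d i)) := by
    ext i j
    by_cases h : i = j
    · subst h; simp [charmatrix_apply_eq]
    · simp [charmatrix_apply_ne _ _ _ h, Matrix.diagonal_apply_ne _ h, Matrix.diagonal_apply_ne d h]
  rw [Matrix.charpoly, h, Matrix.det_diagonal]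

/-- The multiset of eigenvalues of a real symmetric matrix is the multiset of roots of
its characteristic polynomial. -/
lemma eig_multiset_aux {n : ℕ} {A : Matrix (Fin n) (Fin n) ℝ} (hA : A.IsHermitian) :
    Multiset.map hA.eigenvalues Finset.univ.val = A.charpoly.roots := by
  have hsp := hA.spectral_theorem
  set W : Matrix (Fin n) (Fin n) ℝ := (hA.eigenvectorUnitary : Matrix (Fin n) (Fin n) ℝ) with hWdef
  have hWmem : W ∈ Matrix.unitaryGroup (Fin n) ℝ := hA.eigenvectorUnitary.2
  have hst : star W = Wᵀ := by
    rw [Matrix.star_eq_conjTranspose, Matrix.conjTranspose_eq_transpose_of_trivial]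
  have hWWt : W * Wᵀ = 1 := by
    rw [← hst]; exact (Matrix.mem_unitaryGroup_iff.mp hWmem)
  have hdiag : Matrix.diagonal ((RCLike.ofReal : ℝ → ℝ) ∘ hA.eigenvalues)
      = Matrix.diagonal hA.eigenvalues := by
    congr 1
  have hA' : A = W * Matrix.diagonal hA.eigenvalues * Wᵀ := by
    rw [← hdiag, ← hst]; exact hsp
  have h1 : A.charpoly = (Matrix.diagonal hA.eigenvalues).charpoly :=
    (congrArg Matrix.charpoly hA').trans (charpoly_conj_aux W _ hWWt)
  rw [h1, charpoly_diagonal_aux]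
  have h2 : (∏ i, ((X : ℝ[X]) - C (hA.eigenvalues i)))
      = ((Multiset.map hA.eigenvalues Finset.univ.val).map fun a => (X : ℝ[X]) - C a).prod := by
    rw [Multiset.map_map]
    rfl
  rw [h2, Polynomial.roots_multiset_prod_X_sub_C]

/-- The multiset of singular values is determined by the charpoly of `Xᴴ X`. -/
lemma svals_multiset_aux {n : ℕ} (X : Matrix (Fin n) (Fin n) ℝ) :
    Multiset.map (svals X) Finset.univ.val
      = ((Xᴴ * X).charpoly.roots).map Real.sqrt := by
  rw [← eig_multiset_aux (Matrix.isHermitian_conjTranspose_mul_self X), Multiset.map_map]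
  rfl

/-- Tuples with equal value multisets have equal decreasing sorts. -/
lemma sort_desc_eq_aux {n : ℕ} (f g : Fin n → ℝ)
    (h : Multiset.map f Finset.univ.val = Multiset.map g Finset.univ.val) :
    (fun j => f (Tuple.sort (fun i => - f i) j)) = (fun j => g (Tuple.sort (fun i => - g i) j)) := by
  set F : Fin n → ℝ := fun i => -f i with hF
  set G : Fin n → ℝ := fun i => -g i with hG
  have hmul : (↑(List.ofFn F) : Multiset ℝ) = (↑(List.ofFn G) : Multiset ℝ) := by
    have huniv : (Finset.univ : Finset (Fin n)).val = ↑(List.finRange n) := by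
      rw [Fin.univ_def]
    have hf : (↑(List.ofFn F) : Multiset ℝ)
        = Multiset.map (fun x => -x) (Multiset.map f Finset.univ.val) := by
      rw [List.ofFn_eq_map, huniv, Multiset.map_map, Multiset.map_coe]
      rfl
    have hg : (↑(List.ofFn G) : Multiset ℝ)
        = Multiset.map (fun x => -x) (Multiset.map g Finset.univ.val) := by
      rw [List.ofFn_eq_map, huniv, Multiset.map_map, Multiset.map_coe]
      rfl
    rw [hf, hg, h]
  have hperm : List.Perm (List.ofFn (F ∘ Tuple.sort F)) (List.ofFn (G ∘ Tuple.sort G)) :=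
    ((Tuple.sort F).ofFn_comp_perm F).trans
      ((Multiset.coe_eq_coe.mp hmul).trans ((Tuple.sort G).ofFn_comp_perm G).symm)
  have heq : F ∘ Tuple.sort F = G ∘ Tuple.sort G :=
    List.ofFn_injective <| hperm.eq_of_sortedLE
      (Tuple.monotone_sort F).sortedLE_ofFn (Tuple.monotone_sort G).sortedLE_ofFn
  funext j
  have hj := congrFun heq j
  simp only [Function.comp_apply, hF, hG] at hj
  linarith

end Aux

/-- Replacing `M = U S Vᵀ` by the symmetric positive semidefinite
`M' = U S Uᵀ` and `θ' = U Vᵀ θ` changes neither the product `Mθ`, nor `‖θ‖₂`, nor the singular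
values (hence no spectral penalty), so the joint optimization may be restricted to symmetric
positive semidefinite `M`. -/
theorem psd_without_loss_of_generality {P : ℕ} (U S V : Matrix (Fin P) (Fin P) ℝ)
    (hU : U ∈ Matrix.orthogonalGroup (Fin P) ℝ) (hV : V ∈ Matrix.orthogonalGroup (Fin P) ℝ)
    (dg : Fin P → ℝ) (hdg : ∀ i, 0 ≤ dg i) (hS : S = Matrix.diagonal dg)
    (M : Matrix (Fin P) (Fin P) ℝ) (hM : M = U * S * Vᵀ) (θ : Fin P → ℝ) :
    let M' := U * S * Uᵀ
    let θ' := U *ᵥ (Vᵀ *ᵥ θ)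
    M' *ᵥ θ' = M *ᵥ θ ∧
    enorm2 θ' = enorm2 θ ∧
    M'.PosSemidef ∧
    svalsDesc M' = svalsDesc M ∧
    ∀ ω : ℝ → ℝ, specPenalty ω M' = specPenalty ω M := by
  intro M' θ'
  have hUUt : U * Uᵀ = 1 := hU.2
  have hUtU : Uᵀ * U = 1 := hU.1
  have hVVt : V * Vᵀ = 1 := hV.2
  have hnorm : ∀ (W : Matrix (Fin P) (Fin P) ℝ), Wᵀ * W = 1 →
      ∀ v : Fin P → ℝ, ∑ j, (W *ᵥ v) j ^ 2 = ∑ j, v j ^ 2 := by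
    intro W hW v
    have h1 : ∀ w : Fin P → ℝ, ∑ j, w j ^ 2 = w ⬝ᵥ w := by
      intro w; simp [dotProduct, sq]
    rw [h1, h1, Matrix.dotProduct_mulVec, ← Matrix.mulVec_transpose,
      Matrix.mulVec_mulVec, hW, Matrix.one_mulVec]
  have hSt : Sᵀ = S := by rw [hS, Matrix.diagonal_transpose]
  have hM'tM' : M'ᵀ * M' = U * (S * S) * Uᵀ := by
    show (U * S * Uᵀ)ᵀ * (U * S * Uᵀ) = U * (S * S) * Uᵀ
    rw [Matrix.transpose_mul, Matrix.transpose_mul, Matrix.transpose_transpose, hSt]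
    calc Uᵀᵀ * (S * Uᵀ) * (U * S * Uᵀ)
        = Uᵀᵀ * S * (Uᵀ * U) * S * Uᵀ := by noncomm_ring
      _ = U * (S * S) * Uᵀ := by rw [hUtU, Matrix.transpose_transpose]; noncomm_ring
  have hMtM : Mᵀ * M = V * (S * S) * Vᵀ := by
    rw [hM, Matrix.transpose_mul, Matrix.transpose_mul, Matrix.transpose_transpose, hSt]
    calc Vᵀᵀ * (S * Uᵀ) * (U * S * Vᵀ)
        = Vᵀᵀ * S * (Uᵀ * U) * S * Vᵀ := by noncomm_ring
      _ = V * (S * S) * Vᵀ := by rw [hUtU, Matrix.transpose_transpose]; noncomm_ring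
  have hcharpoly : (M'ᵀ * M').charpoly = (Mᵀ * M).charpoly := by
    rw [hM'tM', hMtM, charpoly_conj_aux U _ hUUt, charpoly_conj_aux V _ hVVt]
  have hct : ∀ X : Matrix (Fin P) (Fin P) ℝ, Xᴴ = Xᵀ := fun X =>
    Matrix.conjTranspose_eq_transpose_of_trivial X
  have hsvmul : Multiset.map (svals M') Finset.univ.val
      = Multiset.map (svals M) Finset.univ.val := by
    rw [svals_multiset_aux, svals_multiset_aux, hct, hct, hcharpoly]
  have hdesc : svalsDesc M' = svalsDesc M := sort_desc_eq_aux _ _ hsvmul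
  refine ⟨?_, ?_, ?_, hdesc, ?_⟩
  · show (U * S * Uᵀ) *ᵥ (U *ᵥ (Vᵀ *ᵥ θ)) = M *ᵥ θ
    have hid : U * S * Uᵀ * U * Vᵀ = U * S * Vᵀ := by
      calc U * S * Uᵀ * U * Vᵀ = U * S * (Uᵀ * U) * Vᵀ := by noncomm_ring
        _ = U * S * Vᵀ := by rw [hUtU]; noncomm_ring
    rw [Matrix.mulVec_mulVec, Matrix.mulVec_mulVec, hid, hM]
  · show enorm2 (U *ᵥ (Vᵀ *ᵥ θ)) = enorm2 θ
    unfold enorm2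
    rw [hnorm U hUtU, hnorm Vᵀ (by rw [Matrix.transpose_transpose, hVVt]) θ]
  · show (U * S * Uᵀ).PosSemidef
    have hSpsd : S.PosSemidef := by
      rw [hS]; exact Matrix.posSemidef_diagonal_iff.mpr hdg
    have h := hSpsd.mul_mul_conjTranspose_same U
    rwa [hct, Matrix.mul_assoc, ← Matrix.mul_assoc] at h
  · intro ω
    unfold specPenalty
    have hs : ∀ X : Matrix (Fin P) (Fin P) ℝ, ∑ j, ω (svals X j) = ∑ j, ω (svalsDesc X j) := by
      intro X
      exact (Equiv.sum_comp (Tuple.sort (fun i => - svals X i)) (fun j => ω (svals X j))).symm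
    rw [hs, hs, hdesc]
end
end
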